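/- Let p > 1, set L(s) = s⁴ − (32p/(p+1))s² + (32p(p+3)/(p+1)²)s − 64p/(p+1)² and t₀ = √(2p/(p+1)) + √(2p/(p+1) − √(2p/(p+1))). Then L has exactly one root in the open interval (2t₀, ∞): there exists a unique s₀ > 2t₀ with L(s₀) = 0. -/
import Mathlib


/-- The quartic polynomial `L`. -/
noncomputable def Lpoly (p s : ℝ) : ℝ :=
  s ^ 4 - 32 * p / (p + 1) * s ^ 2 + 32 * p * (p + 3) / (p + 1) ^ 2 * s
    - 64 * p / (p + 1) ^ 2

/-- `t₀ = √(2p/(p+1)) + √(2p/(p+1) − √(2p/(p+1)))`. -/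
noncomputable def t0 (p : ℝ) : ℝ :=
  Real.sqrt (2 * p / (p + 1)) +
    Real.sqrt (2 * p / (p + 1) - Real.sqrt (2 * p / (p + 1)))

/-- The quartic polynomial `H` from Theorem 1.1. -/
noncomputable def Hpoly (p x : ℝ) : ℝ :=
  x ^ 4 - 32 * p * (p + 1) / (p - 1) ^ 2 * x ^ 2
    + 32 * p * (p + 1) * (p + 3) / (p - 1) ^ 3 * x
    - 64 * p * (p + 1) ^ 2 / (p - 1) ^ 4
set_option maxHeartbeats 1000000 in
/-- `L` has exactly one root in the open interval `(2t₀, ∞)`. -/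
theorem Lpoly_unique_root (p : ℝ) (hp : 1 < p) :
    ∃! s₀ : ℝ, 2 * t0 p < s₀ ∧ Lpoly p s₀ = 0 := by
  have hp1 : (0:ℝ) < p + 1 := by linarith
  have hp1' : (p:ℝ) + 1 ≠ 0 := ne_of_gt hp1
  set u : ℝ := Real.sqrt (2 * p / (p + 1)) with hu_def
  have hq0 : (0:ℝ) ≤ 2 * p / (p + 1) := by positivity
  have hu2 : u ^ 2 = 2 * p / (p + 1) := Real.sq_sqrt hq0
  have hq1 : (1:ℝ) < 2 * p / (p + 1) := by
    rw [lt_div_iff₀ hp1]; linarith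
  have hq2 : 2 * p / (p + 1) < 2 := by
    rw [div_lt_iff₀ hp1]; linarith
  have hu0 : 0 ≤ u := Real.sqrt_nonneg _
  have hu : 1 < u := by nlinarith
  have huu : u ^ 2 < 2 := by rw [hu2]; exact hq2
  set w : ℝ := Real.sqrt (2 * p / (p + 1) - u) with hw_def
  have hqu : u < 2 * p / (p + 1) := by nlinarith
  have hw2 : w ^ 2 = u ^ 2 - u := by
    rw [hw_def, Real.sq_sqrt (by linarith), hu2]
  have hw : 0 < w := by
    rw [hw_def]; exact Real.sqrt_pos.mpr (by linarith)
  have ht : t0 p = u + w := rfl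
  -- rewrite Lpoly with q = u^2
  have hL : ∀ s : ℝ, Lpoly p s
      = s ^ 4 - 16 * u ^ 2 * s ^ 2 + 16 * u ^ 2 * (3 - u ^ 2) * s
        - 16 * u ^ 2 * (2 - u ^ 2) := by
    intro s
    have h2 : 32 * p / (p + 1) = 16 * u ^ 2 := by rw [hu2]; field_simp; ring
    have h1 : 32 * p * (p + 3) / (p + 1) ^ 2 = 16 * u ^ 2 * (3 - u ^ 2) := by
      rw [hu2]; field_simp; ring
    have h0 : 64 * p / (p + 1) ^ 2 = 16 * u ^ 2 * (2 - u ^ 2) := by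
      rw [hu2]; field_simp; ring
    rw [Lpoly, h2, h1, h0]
  have hfun : Lpoly p = fun s : ℝ => s ^ 4 - 16 * u ^ 2 * s ^ 2
      + 16 * u ^ 2 * (3 - u ^ 2) * s - 16 * u ^ 2 * (2 - u ^ 2) := funext hL
  -- derivative
  have hd : ∀ s : ℝ, HasDerivAt (Lpoly p)
      (4 * s ^ 3 - 32 * u ^ 2 * s + 16 * u ^ 2 * (3 - u ^ 2)) s := by
    intro s
    rw [hfun]
    have h1 : HasDerivAt (fun x : ℝ => x ^ 4 - 16 * u ^ 2 * x ^ 2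
        + 16 * u ^ 2 * (3 - u ^ 2) * x - 16 * u ^ 2 * (2 - u ^ 2))
        ((4 : ℕ) * s ^ 3 - 16 * u ^ 2 * ((2 : ℕ) * s ^ 1)
          + 16 * u ^ 2 * (3 - u ^ 2) * 1 - 0) s := by
      exact (((hasDerivAt_pow 4 s).sub
        ((hasDerivAt_pow 2 s).const_mul (16 * u ^ 2))).add
        ((hasDerivAt_id s).const_mul (16 * u ^ 2 * (3 - u ^ 2)))).sub
        (hasDerivAt_const s _)
    convert h1 using 1
    push_cast
    ring
  -- derivative positive for s ≥ 2(u+w)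
  have hdpos : ∀ s : ℝ, 2 * (u + w) ≤ s →
      0 < 4 * s ^ 3 - 32 * u ^ 2 * s + 16 * u ^ 2 * (3 - u ^ 2) := by
    intro s hs
    have hid : 4 * s ^ 3 - 32 * u ^ 2 * s + 16 * u ^ 2 * (3 - u ^ 2)
        = 4 * (s - 2 * (u + w)) ^ 3 + 24 * (u + w) * (s - 2 * (u + w)) ^ 2
          + (64 * u ^ 2 - 48 * u + 96 * u * w) * (s - 2 * (u + w))
          + 16 * u * (u * (u - 1) * (3 - u) + 2 * (2 * u - 1) * w) := by
      linear_combination (48 * s - 64 * w) * hw2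
    rw [hid]
    have hr : 0 ≤ s - 2 * (u + w) := by linarith
    have hA0 : 0 < 16 * u * (u * (u - 1) * (3 - u) + 2 * (2 * u - 1) * w) := by
      nlinarith
    have hA1 : 0 < 64 * u ^ 2 - 48 * u + 96 * u * w := by nlinarith
    have h3 : 0 ≤ 4 * (s - 2 * (u + w)) ^ 3 := by positivity
    nlinarith [mul_nonneg (le_of_lt hA1) hr, sq_nonneg (s - 2 * (u + w))]
  -- strict mono on [2 t0, ∞)
  have hmono : StrictMonoOn (Lpoly p) (Set.Ici (2 * t0 p)) := by
    apply strictMonoOn_of_deriv_pos (convex_Ici _)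
    · rw [hfun]; fun_prop
    · intro s hs
      rw [interior_Ici, Set.mem_Ioi] at hs
      rw [(hd s).deriv]
      exact hdpos s (by rw [ht] at hs; linarith)
  -- value at 2 t0 is negative
  have hneg : Lpoly p (2 * t0 p) < 0 := by
    rw [ht, hL]
    have hid : (2 * (u + w)) ^ 4 - 16 * u ^ 2 * (2 * (u + w)) ^ 2
        + 16 * u ^ 2 * (3 - u ^ 2) * (2 * (u + w)) - 16 * u ^ 2 * (2 - u ^ 2)
        = -16 * u ^ 2 * (u ^ 2 - 1) * (2 * u - 1 + 2 * w) := by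
      linear_combination (16 * w ^ 2 + 64 * u * w + 48 * u ^ 2 - 16 * u) * hw2
    rw [hid]
    have h1 : 0 < u ^ 2 - 1 := by nlinarith
    have h2 : 0 < 2 * u - 1 + 2 * w := by linarith
    have h16 : (0:ℝ) < 16 * u ^ 2 := by positivity
    nlinarith [mul_pos (mul_pos h16 h1) h2]
  -- value at 6 is positive
  have ht6 : 2 * t0 p ≤ 6 := by
    rw [ht]
    have hw15 : w < 3 / 2 := by nlinarith
    have hu15 : u < 3 / 2 := by nlinarith
    linarith
  have hpos6 : 0 < Lpoly p 6 := by
    rw [hL]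
    have h4 : u ^ 2 * u ^ 2 < 4 := by nlinarith
    nlinarith [h4, huu]
  -- existence via IVT
  have hcont : ContinuousOn (Lpoly p) (Set.Icc (2 * t0 p) 6) := by
    rw [hfun]; fun_prop
  have hivt := intermediate_value_Icc ht6 hcont
  have h0mem : (0:ℝ) ∈ Set.Icc (Lpoly p (2 * t0 p)) (Lpoly p 6) :=
    ⟨le_of_lt hneg, le_of_lt hpos6⟩
  obtain ⟨s₀, hs₀mem, hs₀⟩ := hivt h0mem
  have hs₀gt : 2 * t0 p < s₀ := by
    rcases lt_or_eq_of_le hs₀mem.1 with h | h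
    · exact h
    · exfalso; rw [← h] at hs₀; rw [hs₀] at hneg; exact lt_irrefl 0 hneg
  refine ⟨s₀, ⟨hs₀gt, hs₀⟩, ?_⟩
  rintro y ⟨hy1, hy2⟩
  exact hmono.injOn (Set.mem_Ici.mpr (le_of_lt hy1))
    (Set.mem_Ici.mpr (le_of_lt hs₀gt)) (by rw [hy2, hs₀])
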